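/- Let n ≥ 1 be an integer and θ > 0 a real number, and set p_j = θ/(θ+j−1) for j = 1,…,n. Let ξ_1,…,ξ_n be independent {0,1}-valued random variables with P(ξ_j = 1) = p_j, let K = ∑_{j=1}^n ξ_j, and let λ = ∑_{j=1}^n p_j. Then the total variation distance between the law of K and the Poisson distribution with mean λ satisfies d_TV(K, Poisson(λ)) ≤ (nθ + n + θ)/(θ(n+θ)·log(1+n/θ) + n/2). -/

import Mathlib

open MeasureTheory ProbabilityTheory Finset

noncomputable def pois (l : ℝ) (k : ℕ) : ℝ := Real.exp (-l) * l^k / (Nat.factorial k)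

lemma pois_pos {l : ℝ} (hl : 0 < l) (k : ℕ) : 0 < pois l k := by
  unfold pois; positivity

lemma hasSum_pois {l : ℝ} (hl : 0 < l) : HasSum (pois l) 1 := by
  have := ProbabilityTheory.poissonPMFRealSum ⟨l, hl.le⟩
  unfold ProbabilityTheory.poissonPMFReal at this
  exact this

lemma pois_succ {l : ℝ} (hl : 0 < l) (i : ℕ) :
    l * pois l i = (i+1 : ℝ) * pois l (i+1) := by
  unfold pois
  rw [Nat.factorial_succ]
  have h1 : (Nat.factorial i : ℝ) ≠ 0 := Nat.cast_ne_zero.mpr (Nat.factorial_ne_zero i)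
  have h2 : (i+1 : ℝ) ≠ 0 := by positivity
  push_cast
  field_simp
  ring

noncomputable def poisF (l : ℝ) (k : ℕ) : ℝ := ∑ i ∈ range (k+1), pois l i
noncomputable def poisG (l : ℝ) (k : ℕ) : ℝ := 1 - poisF l k

lemma poisF_pos {l : ℝ} (hl : 0 < l) (k : ℕ) : 0 < poisF l k :=
  Finset.sum_pos (fun i _ => pois_pos hl i) ⟨0, by simp⟩

lemma hasSum_tail {l : ℝ} (hl : 0 < l) (k : ℕ) :
    HasSum (fun m => pois l (m + (k+1))) (poisG l k) := by
  have := (hasSum_nat_add_iff' (f := pois l) (k+1)).mpr (hasSum_pois hl)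
  simpa [poisG, poisF] using this

lemma poisG_nonneg {l : ℝ} (hl : 0 < l) (k : ℕ) : 0 ≤ poisG l k :=
  (hasSum_tail hl k).nonneg (fun m => (pois_pos hl _).le)

lemma poisF_succ (l : ℝ) (k : ℕ) : poisF l (k+1) = poisF l k + pois l (k+1) := by
  simp [poisF, Finset.sum_range_succ]

lemma poisG_succ (l : ℝ) (k : ℕ) : poisG l k = poisG l (k+1) + pois l (k+1) := by
  simp [poisG, poisF_succ]; ring

/-- Claim 1: `l * F k ≤ (k+1) * F (k+1)` -/
lemma claim1 {l : ℝ} (hl : 0 < l) (k : ℕ) :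
    l * poisF l k ≤ (k+1 : ℝ) * poisF l (k+1) := by
  have h1 : l * poisF l k = ∑ i ∈ range (k+1), (i+1 : ℝ) * pois l (i+1) := by
    rw [poisF, Finset.mul_sum]
    exact Finset.sum_congr rfl (fun i _ => pois_succ hl i)
  rw [h1]
  have h2 : ∑ i ∈ range (k+1), (i+1 : ℝ) * pois l (i+1)
      ≤ ∑ i ∈ range (k+1), (k+1 : ℝ) * pois l (i+1) := by
    apply Finset.sum_le_sum
    intro i hi
    have : (i:ℝ)+1 ≤ (k:ℝ)+1 := by
      have h := Nat.lt_succ_iff.mp (Finset.mem_range.mp hi)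
      have : (i:ℝ) ≤ k := by exact_mod_cast h
      linarith
    nlinarith [(pois_pos hl (i+1)).le]
  refine h2.trans ?_
  rw [← Finset.mul_sum]
  have h3 : ∑ i ∈ range (k+1), pois l (i+1) ≤ poisF l (k+1) := by
    have : poisF l (k+1) = pois l 0 + ∑ i ∈ range (k+1), pois l (i+1) := by
      rw [poisF, Finset.sum_range_succ', add_comm]
    nlinarith [(pois_pos hl 0).le]
  nlinarith [poisF_pos hl (k+1), (Nat.cast_nonneg k : (0:ℝ) ≤ k)]

/-- Claim 2: `(k+2) * G (k+1) ≤ l * G k` -/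
lemma claim2 {l : ℝ} (hl : 0 < l) (k : ℕ) :
    ((k:ℝ)+2) * poisG l (k+1) ≤ l * poisG l k := by
  have hG1 : HasSum (fun m => ((k:ℝ)+2) * pois l (m + (k+2))) (((k:ℝ)+2) * poisG l (k+1)) :=
    (hasSum_tail hl (k+1)).mul_left _
  have hG0 : HasSum (fun m => l * pois l (m + (k+1))) (l * poisG l k) :=
    (hasSum_tail hl k).mul_left _
  refine hasSum_le (fun m => ?_) hG1 hG0
  have := pois_succ hl (m + (k+1))
  have h2 : (↑(m + (k+1)) + 1 : ℝ) = (m:ℝ) + k + 2 := by push_cast; ring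
  rw [this, h2]
  have hmk : (m : ℝ) + (k + 1) + 1 = (m:ℝ) + k + 2 := by ring
  have : pois l (m + (k + 1) + 1) = pois l (m + (k+2)) := by ring_nf
  rw [this]
  nlinarith [(pois_pos hl (m + (k+2))).le, (Nat.cast_nonneg m : (0:ℝ) ≤ m)]

noncomputable def steinMu (l : ℝ) (f : ℕ → ℝ) : ℝ := ∑' k, pois l k * f k
noncomputable def steinS (l : ℝ) (f : ℕ → ℝ) (k : ℕ) : ℝ := ∑ i ∈ range (k+1), pois l i * f i

noncomputable def steinG (l : ℝ) (f : ℕ → ℝ) : ℕ → ℝ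
  | 0 => 0
  | (k+1) => ((Nat.factorial k : ℝ) * Real.exp l / l^(k+1)) * (steinS l f k - steinMu l f * poisF l k)

variable {l : ℝ} {f : ℕ → ℝ}

lemma summable_pf (hl : 0 < l) (hf0 : ∀ k, 0 ≤ f k) (hf1 : ∀ k, f k ≤ 1) :
    Summable (fun k => pois l k * f k) := by
  refine Summable.of_nonneg_of_le (fun k => mul_nonneg (pois_pos hl k).le (hf0 k))
    (fun k => ?_) (hasSum_pois hl).summable
  nlinarith [pois_pos hl k, hf1 k, hf0 k]

lemma hasSum_tail_pf (hl : 0 < l) (hf0 : ∀ k, 0 ≤ f k) (hf1 : ∀ k, f k ≤ 1) (k : ℕ) :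
    HasSum (fun m => pois l (m + (k+1)) * f (m + (k+1))) (steinMu l f - steinS l f k) := by
  have := (hasSum_nat_add_iff' (f := fun k => pois l k * f k) (k+1)).mpr
    (summable_pf hl hf0 hf1).hasSum
  simpa [steinMu, steinS] using this

lemma steinS_nonneg (hl : 0 < l) (hf0 : ∀ k, 0 ≤ f k) (k : ℕ) : 0 ≤ steinS l f k :=
  Finset.sum_nonneg (fun i _ => mul_nonneg (pois_pos hl i).le (hf0 i))

lemma steinS_le (hl : 0 < l) (hf1 : ∀ k, f k ≤ 1) (hf0 : ∀ k, 0 ≤ f k) (k : ℕ) :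
    steinS l f k ≤ poisF l k :=
  Finset.sum_le_sum (fun i _ => by nlinarith [pois_pos hl i, hf1 i, hf0 i])

lemma tail_nonneg (hl : 0 < l) (hf0 : ∀ k, 0 ≤ f k) (hf1 : ∀ k, f k ≤ 1) (k : ℕ) :
    0 ≤ steinMu l f - steinS l f k :=
  (hasSum_tail_pf hl hf0 hf1 k).nonneg (fun m => mul_nonneg (pois_pos hl _).le (hf0 _))

lemma tail_le (hl : 0 < l) (hf0 : ∀ k, 0 ≤ f k) (hf1 : ∀ k, f k ≤ 1) (k : ℕ) :
    steinMu l f - steinS l f k ≤ poisG l k := by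
  refine hasSum_le (fun m => ?_) (hasSum_tail_pf hl hf0 hf1 k) (hasSum_tail hl k)
  nlinarith [pois_pos hl (m+(k+1)), hf1 (m+(k+1)), hf0 (m+(k+1))]

lemma stein_eq (hl : 0 < l) (k : ℕ) :
    l * steinG l f (k+1) - k * steinG l f k = f k - steinMu l f := by
  have hne : l ≠ 0 := hl.ne'
  have hexp : Real.exp (-l) * Real.exp l = 1 := by
    rw [← Real.exp_add]; simp
  cases k with
  | zero =>
    simp only [steinG, Nat.factorial_zero, Nat.cast_zero, Nat.cast_one, zero_mul, sub_zero]
    have hS : steinS l f 0 = pois l 0 * f 0 := by simp [steinS]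
    have hF : poisF l 0 = pois l 0 := by simp [poisF]
    rw [hS, hF]
    have : pois l 0 = Real.exp (-l) := by simp [pois]
    rw [this, Real.exp_neg]
    field_simp
    ring
  | succ k =>
    simp only [steinG]
    have hfac : (Nat.factorial (k+1) : ℝ) = (k+1) * Nat.factorial k := by
      rw [Nat.factorial_succ]; push_cast; ring
    have hSucc : steinS l f (k+1) = steinS l f k + pois l (k+1) * f (k+1) := by
      simp [steinS, Finset.sum_range_succ]
    have hFsucc : poisF l (k+1) = poisF l k + pois l (k+1) := poisF_succ l k
    rw [hfac, hSucc, hFsucc]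
    have hpois : pois l (k+1) = Real.exp (-l) * l^(k+1) / Nat.factorial (k+1) := rfl
    rw [hpois, hfac, Real.exp_neg]
    have h1 : (Nat.factorial k : ℝ) ≠ 0 := Nat.cast_ne_zero.mpr (Nat.factorial_ne_zero k)
    have h2 : ((k:ℝ)+1) ≠ 0 := by positivity
    have h3 : l^(k+1) ≠ 0 := pow_ne_zero _ hne
    have h4 : Real.exp l ≠ 0 := Real.exp_ne_zero l
    push_cast
    field_simp
    ring


lemma stein_inc_abs {l kk A B π Fk Fk1 Gk Gk1 S0 S1 μ t g1 g2 : ℝ}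
    (hl : 0 < l) (hkk : 0 < kk) (hApos : 0 < A) (hBpos : 0 < B) (hπpos : 0 < π)
    (hAB : A * l = B * kk) (hπA : π * A = 1/l) (hπB : π * B = 1/kk)
    (hF1 : Fk1 = Fk + π) (hG1 : Gk = Gk1 + π) (hFG : Fk1 = 1 - Gk1)
    (hFkpos : 0 ≤ Fk) (hGk1 : 0 ≤ Gk1)
    (hc1 : l * Fk ≤ kk * Fk1) (hc2 : (kk+1) * Gk1 ≤ l * Gk)
    (hS1 : S1 = S0 + t) (hs0 : 0 ≤ S0) (hsF : S0 ≤ Fk) (ht0 : 0 ≤ t) (htπ : t ≤ π)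
    (hr0 : 0 ≤ μ - S1) (hrG : μ - S1 ≤ Gk1)
    (hg2 : g2 = A * (S1 - μ * Fk1)) (hg1 : g1 = B * (S0 - μ * Fk)) :
    |g2 - g1| ≤ 1/l := by
  obtain ⟨r, hr⟩ : ∃ r, r = μ - S1 := ⟨_, rfl⟩
  have hμ : μ = S0 + t + r := by rw [hr, hS1]; ring
  have hFk' : Fk = 1 - Gk1 - π := by rw [hF1] at hFG; linarith
  have hr0' : 0 ≤ r := hr ▸ hr0
  have hrG' : r ≤ Gk1 := hr ▸ hrG
  obtain ⟨α, hα⟩ : ∃ x, x = A * Gk1 - B * Gk := ⟨_, rfl⟩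
  obtain ⟨β, hβ⟩ : ∃ x, x = A * Gk1 + B * Fk := ⟨_, rfl⟩
  obtain ⟨γ, hγ⟩ : ∃ x, x = B * Fk - A * Fk1 := ⟨_, rfl⟩
  have hΔ : g2 - g1 = S0 * α + t * β + r * γ := by
    rw [hg2, hg1, hS1, hμ, hα, hβ, hγ, hFG, hG1, hFk']
    ring
  have hα0 : α ≤ 0 := by
    rw [hα]
    have h1 : A * Gk1 * l = B * kk * Gk1 := by rw [← hAB]; ring
    nlinarith [mul_le_mul_of_nonneg_left hc2 hBpos.le, mul_nonneg hBpos.le hGk1]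
  have hγ0 : γ ≤ 0 := by
    rw [hγ]
    have h1 : A * Fk1 * l = B * kk * Fk1 := by rw [← hAB]; ring
    nlinarith [mul_le_mul_of_nonneg_left hc1 hBpos.le]
  have hβ0 : 0 ≤ β := by rw [hβ]; positivity
  have hid : Fk * α + π * β + Gk1 * γ = 0 := by
    rw [hα, hβ, hγ, hF1, hG1]; ring
  have hub : g2 - g1 ≤ π * β := by
    rw [hΔ]
    linarith only [mul_nonneg hs0 (neg_nonneg.mpr hα0), mul_nonneg hr0' (neg_nonneg.mpr hγ0),
      mul_le_mul_of_nonneg_right htπ hβ0, hid]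
  have hlb : -(π * β) ≤ g2 - g1 := by
    rw [hΔ]
    linarith only [mul_le_mul_of_nonneg_right hsF (neg_nonneg.mpr hα0),
      mul_le_mul_of_nonneg_right hrG' (neg_nonneg.mpr hγ0), mul_nonneg ht0 hβ0, hid]
  have habs : |g2 - g1| ≤ π * β := abs_le.mpr ⟨hlb, hub⟩
  refine habs.trans ?_
  have hπβ : π * β = Gk1 * (1/l) + Fk * (1/kk) := by
    rw [hβ, ← hπA, ← hπB]; ring
  rw [hπβ]
  have hc1' : l * Fk ≤ kk * (1 - Gk1) := by rw [← hFG]; exact hc1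
  have key : kk * Gk1 + l * Fk ≤ kk := by linarith only [hc1']
  have hdiff : 1/l - (Gk1 * (1/l) + Fk * (1/kk)) = (kk - (kk * Gk1 + l * Fk))/(l*kk) := by
    field_simp
  have : 0 ≤ 1/l - (Gk1 * (1/l) + Fk * (1/kk)) := by
    rw [hdiff]; exact div_nonneg (by linarith) (by positivity)
  linarith

lemma stein_increment {l : ℝ} {f : ℕ → ℝ} (hl : 0 < l) (hf0 : ∀ k, 0 ≤ f k)
    (hf1 : ∀ k, f k ≤ 1) (k : ℕ) :
    |steinG l f (k+2) - steinG l f (k+1)| ≤ 1/l := by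
  have hfact1 : (Nat.factorial (k+1) : ℝ) ≠ 0 := Nat.cast_ne_zero.mpr (Nat.factorial_ne_zero _)
  have hfact0 : (Nat.factorial k : ℝ) ≠ 0 := Nat.cast_ne_zero.mpr (Nat.factorial_ne_zero _)
  have hlk1 : l^(k+1) ≠ 0 := pow_ne_zero _ hl.ne'
  have hkk : (0:ℝ) < (k:ℝ)+1 := by positivity
  refine stein_inc_abs (l := l) (kk := (k:ℝ)+1)
    (A := (Nat.factorial (k+1) : ℝ) * Real.exp l / l^(k+2))
    (B := (Nat.factorial k : ℝ) * Real.exp l / l^(k+1))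
    (π := pois l (k+1)) (Fk := poisF l k) (Fk1 := poisF l (k+1))
    (Gk := poisG l k) (Gk1 := poisG l (k+1))
    (S0 := steinS l f k) (S1 := steinS l f (k+1)) (μ := steinMu l f)
    (t := pois l (k+1) * f (k+1))
    hl hkk (by positivity) (by positivity) (pois_pos hl (k+1))
    ?_ ?_ ?_
    (poisF_succ l k) (poisG_succ l k) (by simp [poisG])
    (poisF_pos hl k).le (poisG_nonneg hl (k+1))
    ?_ ?_
    (by simp [steinS, Finset.sum_range_succ])
    (steinS_nonneg hl hf0 k) (steinS_le hl hf1 hf0 k)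
    (mul_nonneg (pois_pos hl (k+1)).le (hf0 _))
    (by nlinarith [pois_pos hl (k+1), hf1 (k+1)])
    (tail_nonneg hl hf0 hf1 (k+1)) (tail_le hl hf0 hf1 (k+1))
    rfl rfl
  · -- hAB
    rw [Nat.factorial_succ]
    have : l^(k+2) = l^(k+1) * l := by ring
    rw [this]; push_cast; field_simp
  · -- hπA
    show Real.exp (-l) * l^(k+1) / (Nat.factorial (k+1)) * _ = _
    rw [Real.exp_neg]
    have : l^(k+2) = l^(k+1) * l := by ring
    rw [this]; field_simp
  · -- hπB
    show Real.exp (-l) * l^(k+1) / (Nat.factorial (k+1)) * _ = _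
    rw [Real.exp_neg, Nat.factorial_succ]
    push_cast; field_simp
  · -- hc1
    exact claim1 hl k
  · -- hc2
    have := claim2 hl k
    push_cast
    convert this using 2
    ring

lemma log_le_half {t : ℝ} (ht : 1 ≤ t) : Real.log t ≤ (t - 1/t)/2 := by
  have h0 : (0:ℝ) < 1 := one_pos
  set F : ℝ → ℝ := fun x => (x - 1/x)/2 - Real.log x with hF
  have hderiv : ∀ x ∈ Set.Ioi (0:ℝ), HasDerivAt F ((1 + 1/x^2)/2 - 1/x) x := by
    intro x hx
    have hx0 : x ≠ 0 := (Set.mem_Ioi.mp hx).ne'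
    have h1 : HasDerivAt (fun x : ℝ => x - 1/x) (1 + (x^2)⁻¹) x := by
      have h0 := (hasDerivAt_id' x).sub (hasDerivAt_inv hx0)
      have e : ((fun x : ℝ => x) - fun y => y⁻¹) = (fun x : ℝ => x - 1/x) := by
        funext y; simp [one_div]
      rw [e] at h0
      exact h0.congr_deriv (by ring)
    have h2 := h1.div_const 2
    have h3 : HasDerivAt Real.log x⁻¹ x := Real.hasDerivAt_log hx0
    have := h2.sub h3
    exact this.congr_deriv (by ring)
  have hmono : MonotoneOn F (Set.Ici (1:ℝ)) := by
    apply monotoneOn_of_deriv_nonneg (convex_Ici 1)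
    · apply ContinuousOn.sub
      · apply ContinuousOn.div_const
        apply ContinuousOn.sub continuousOn_id
        exact continuousOn_const.div continuousOn_id (fun x hx => by
          have : (1:ℝ) ≤ x := hx; positivity)
      · exact Real.continuousOn_log.mono (fun x hx => by
          have : (1:ℝ) ≤ x := hx; simp; linarith)
    · intro x hx
      rw [interior_Ici] at hx
      have hx1 : (1:ℝ) < x := hx
      exact ((hderiv x (Set.mem_Ioi.mpr (by linarith))).differentiableAt).differentiableWithinAt
    · intro x hx
      rw [interior_Ici] at hx
      have hx1 : (1:ℝ) < x := hx
      have hx0 : (0:ℝ) < x := by linarith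
      rw [((hderiv x (Set.mem_Ioi.mpr hx0)).deriv)]
      have : (1 + 1/x^2)/2 - 1/x = (x-1)^2/(2*x^2) := by field_simp; ring
      rw [this]
      positivity
  have h1 : F 1 ≤ F t := hmono (by simp) (by simpa using ht) ht
  have hF1 : F 1 = 0 := by simp [hF]
  rw [hF1] at h1
  simp only [hF] at h1
  linarith

lemma Icc_to_range (n : ℕ) (h : ℕ → ℝ) : ∑ j ∈ Icc 1 n, h j = ∑ i ∈ range n, h (1+i) := by
  rw [← Finset.Ico_add_one_right_eq_Icc, Finset.sum_Ico_eq_sum_range]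
  simp

lemma trapezoid {a : ℝ} (ha : 0 < a) :
    Real.log (a+1) - Real.log a ≤ (1/a + 1/(a+1))/2 := by
  have ht : 1 ≤ (a+1)/a := by rw [le_div_iff₀ ha]; linarith
  have := log_le_half ht
  rw [Real.log_div (by linarith) ha.ne'] at this
  have heq : ((a+1)/a - 1/((a+1)/a))/2 = (1/a + 1/(a+1))/2 := by
    rw [one_div_div]
    field_simp
    ring
  rw [heq] at this
  linarith

lemma partC_lam (n : ℕ) (hn : 1 ≤ n) {θ : ℝ} (hθ : 0 < θ) :
    θ * Real.log (1 + n/θ) + n/(2*(n+θ)) ≤ ∑ j ∈ Icc 1 n, θ / (θ + (j:ℝ) - 1) := by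
  have hsum : ∑ j ∈ Icc 1 n, θ / (θ + (j:ℝ) - 1) = ∑ i ∈ range n, θ / (θ + i) := by
    rw [Icc_to_range]
    apply Finset.sum_congr rfl
    intro i _
    push_cast
    ring_nf
  rw [hsum]
  have hterm : ∀ i ∈ range n, θ * (Real.log (θ+i+1) - Real.log (θ+i))
      + (θ/2) * (1/(θ+i) - 1/(θ+i+1)) ≤ θ / (θ + i) := by
    intro i _
    have hai : (0:ℝ) < θ + i := by positivity
    have := trapezoid hai
    have heq : (θ+(i:ℝ))+1 = θ+i+1 := by ring
    calc θ * (Real.log (θ+i+1) - Real.log (θ+i)) + (θ/2) * (1/(θ+i) - 1/(θ+i+1))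
        ≤ θ * ((1/(θ+i) + 1/(θ+i+1))/2) + (θ/2) * (1/(θ+i) - 1/(θ+i+1)) := by
          have h2 := mul_le_mul_of_nonneg_left (heq ▸ this) hθ.le
          linarith
      _ = θ / (θ + i) := by field_simp; ring
  have hsum2 : ∑ i ∈ range n, (θ * (Real.log (θ+i+1) - Real.log (θ+i))
      + (θ/2) * (1/(θ+i) - 1/(θ+i+1))) ≤ ∑ i ∈ range n, θ / (θ + i) :=
    Finset.sum_le_sum hterm
  have htel1 : ∑ i ∈ range n, (Real.log (θ+i+1) - Real.log (θ+i))
      = Real.log (θ+n) - Real.log θ := by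
    have h := Finset.sum_range_sub (f := fun i => Real.log (θ+i)) n
    simp only [Nat.cast_zero, add_zero, Nat.cast_add, Nat.cast_one] at h
    rw [← h]
    apply Finset.sum_congr rfl
    intro i _
    ring_nf
  have htel2 : ∑ i ∈ range n, ((1:ℝ)/(θ+i) - 1/(θ+i+1)) = 1/θ - 1/(θ+n) := by
    have h := Finset.sum_range_sub' (f := fun i => (1:ℝ)/(θ+i)) n
    simp only [Nat.cast_zero, add_zero, Nat.cast_add, Nat.cast_one] at h
    rw [← h]
    apply Finset.sum_congr rfl
    intro i _
    ring_nf
  have hexp : ∑ i ∈ range n, (θ * (Real.log (θ+i+1) - Real.log (θ+i))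
      + (θ/2) * (1/(θ+i) - 1/(θ+i+1)))
      = θ * (Real.log (θ+n) - Real.log θ) + (θ/2) * (1/θ - 1/(θ+n)) := by
    rw [Finset.sum_add_distrib, ← Finset.mul_sum, ← Finset.mul_sum, htel1, htel2]
  have hlog : Real.log (θ+n) - Real.log θ = Real.log (1 + n/θ) := by
    rw [← Real.log_div (by positivity) hθ.ne']
    congr 1
    field_simp
  have hfrac : (θ/2) * (1/θ - 1/(θ+n)) = n/(2*(n+θ)) := by
    have h1 : (0:ℝ) < θ + n := by positivity
    field_simp
    ring
  rw [hexp, hlog, hfrac] at hsum2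
  exact hsum2

lemma partC_S (n : ℕ) (hn : 1 ≤ n) {θ : ℝ} (hθ : 0 < θ) :
    ∑ j ∈ Icc 1 n, (θ / (θ + (j:ℝ) - 1))^2 ≤ ((n:ℝ)*θ + n + θ)/(n+θ) := by
  have hsum : ∑ j ∈ Icc 1 n, (θ / (θ + (j:ℝ) - 1))^2 = ∑ i ∈ range n, (θ / (θ + i))^2 := by
    rw [Icc_to_range]
    apply Finset.sum_congr rfl
    intro i _
    push_cast
    ring_nf
  rw [hsum]
  obtain ⟨m, rfl⟩ : ∃ m, n = m + 1 := ⟨n - 1, (Nat.succ_pred_eq_of_pos hn).symm⟩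
  rw [Finset.sum_range_succ']
  have h0 : (θ / (θ + (0:ℕ)))^2 = 1 := by
    simp
    field_simp
    exact Or.inl hθ.ne'
  rw [h0]
  have hterm : ∀ i ∈ range m, (θ / (θ + (i+1:ℕ)))^2 ≤ θ^2/(θ+i) - θ^2/(θ+i+1) := by
    intro i _
    have h1 : (0:ℝ) < θ + i := by positivity
    have h2 : (0:ℝ) < θ + i + 1 := by positivity
    push_cast
    rw [div_pow, div_sub_div _ _ h1.ne' h2.ne']
    rw [div_le_div_iff₀ (by positivity) (by positivity)]
    ring_nf
    nlinarith [sq_nonneg θ, mul_pos h1 h2]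
  have hsum2 := Finset.sum_le_sum hterm
  have htel : ∑ i ∈ range m, (θ^2/(θ+i) - θ^2/(θ+i+1)) = θ^2/θ - θ^2/(θ+m) := by
    have h := Finset.sum_range_sub' (f := fun i => θ^2/(θ+i)) m
    simp only [Nat.cast_zero, add_zero, Nat.cast_add, Nat.cast_one] at h
    rw [← h]
    apply Finset.sum_congr rfl
    intro i _
    ring_nf
  rw [htel] at hsum2
  have hm : (0:ℝ) ≤ m := Nat.cast_nonneg m
  have h1 : (0:ℝ) < θ + m := by positivity
  have h2 : (0:ℝ) < (m:ℝ) + 1 + θ := by positivity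
  have key : θ^2/θ - θ^2/(θ+m) + 1 ≤ ((m+1:ℝ)*θ + (m+1) + θ)/((m+1)+θ) := by
    have e1 : θ^2/θ = θ := by field_simp
    rw [e1, ← sub_nonneg]
    have e2 : ((m+1:ℝ)*θ + (m+1) + θ)/((m+1)+θ) - (θ - θ^2/(θ+m) + 1)
        = θ^2 / ((θ+m)*((m:ℝ)+1+θ)) := by
      field_simp
      ring
    rw [e2]
    positivity
  push_cast at key hsum2 ⊢
  linarith

open MeasureTheory ProbabilityTheory

theorem stmt_6 (n : ℕ) (hn : 1 ≤ n) (θ : ℝ) (hθ : 0 < θ)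
    {Ω : Type*} [MeasurableSpace Ω] (P : Measure Ω) [IsProbabilityMeasure P]
    (ξ : ℕ → Ω → ℕ)
    (hmeas : ∀ j, Measurable (ξ j))
    (hval : ∀ j ω, ξ j ω ≤ 1)
    (hindep : iIndepFun ξ P)
    (hp : ∀ j ∈ Finset.Icc 1 n, (P {ω | ξ j ω = 1}).toReal = θ / (θ + (j : ℝ) - 1)) :
    (1 / 2) * ∑' k : ℕ,
        |(P {ω | ∑ j ∈ Finset.Icc 1 n, ξ j ω = k}).toReal -
          Real.exp (-(∑ j ∈ Finset.Icc 1 n, θ / (θ + (j : ℝ) - 1))) *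
            (∑ j ∈ Finset.Icc 1 n, θ / (θ + (j : ℝ) - 1)) ^ k / (Nat.factorial k)| ≤
      ((n : ℝ) * θ + n + θ) / (θ * (n + θ) * Real.log (1 + n / θ) + n / 2) := by
  classical
  set p : ℕ → ℝ := fun j => θ / (θ + (j : ℝ) - 1) with hpdef
  set l : ℝ := ∑ j ∈ Finset.Icc 1 n, θ / (θ + (j : ℝ) - 1) with hldef
  have hmem1 : 1 ∈ Finset.Icc 1 n := by simp [hn]
  have hppos : ∀ j ∈ Finset.Icc 1 n, 0 < p j := by
    intro j hj
    have h1 : 1 ≤ j := (Finset.mem_Icc.mp hj).1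
    have : (1:ℝ) ≤ (j:ℝ) := by exact_mod_cast h1
    have : 0 < θ + (j:ℝ) - 1 := by linarith
    exact div_pos hθ this
  have hl : 0 < l := Finset.sum_pos hppos ⟨1, hmem1⟩
  -- the random variables
  set K : Ω → ℕ := fun ω => ∑ j ∈ Finset.Icc 1 n, ξ j ω with hKdef
  have hKmeas : Measurable K := by
    apply Finset.measurable_sum
    intro j _
    exact hmeas j
  have hKle : ∀ ω, K ω ≤ n := by
    intro ω
    calc K ω ≤ ∑ _j ∈ Finset.Icc 1 n, 1 := Finset.sum_le_sum (fun j _ => hval j ω)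
    _ = n := by simp
  set a : ℕ → ℝ := fun k => (P {ω | K ω = k}).toReal with hadef
  have hsetK : ∀ k, MeasurableSet {ω | K ω = k} := fun k =>
    hKmeas (measurableSet_singleton k)
  -- integral of φ ∘ K
  have hInt : ∀ φ : ℕ → ℝ, ∫ ω, φ (K ω) ∂P = ∑ k ∈ Finset.range (n+1), a k * φ k := by
    intro φ
    have hpt : ∀ ω, φ (K ω) = ∑ k ∈ Finset.range (n+1),
        Set.indicator {ω' | K ω' = k} (fun _ => φ k) ω := by
      intro ω
      have h1 : ∀ k, Set.indicator {ω' | K ω' = k} (fun _ => φ k) ω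
          = if K ω = k then φ k else 0 := by
        intro k
        simp [Set.indicator, Set.mem_setOf_eq]
      simp only [h1]
      rw [Finset.sum_ite_eq]
      simp [Nat.lt_succ_iff.mpr (hKle ω)]
    calc ∫ ω, φ (K ω) ∂P
        = ∫ ω, ∑ k ∈ Finset.range (n+1), Set.indicator {ω' | K ω' = k} (fun _ => φ k) ω ∂P := by
          congr 1
          funext ω
          exact hpt ω
      _ = ∑ k ∈ Finset.range (n+1), ∫ ω, Set.indicator {ω' | K ω' = k} (fun _ => φ k) ω ∂P := by
          apply integral_finset_sum
          intro k _
          exact (integrable_const (φ k)).indicator (hsetK k)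
      _ = ∑ k ∈ Finset.range (n+1), a k * φ k := by
          apply Finset.sum_congr rfl
          intro k _
          rw [integral_indicator_const (φ k) (hsetK k)]
          rw [hadef]
          simp [smul_eq_mul, mul_comm, Measure.real]
  have hsum_a : ∑ k ∈ Finset.range (n+1), a k = 1 := by
    have h := hInt (fun _ => 1)
    simp only [mul_one] at h
    rw [← h]
    simp
  have ha0 : ∀ k ∉ Finset.range (n+1), a k = 0 := by
    intro k hk
    have hk' : n < k := by simpa [Nat.lt_succ_iff] using hk
    have : {ω | K ω = k} = ∅ := by
      ext ω
      simp only [Set.mem_setOf_eq, Set.mem_empty_iff_false, iff_false]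
      intro h
      exact absurd (h ▸ hKle ω) (by omega)
    rw [hadef]
    simp [this]
  have hanneg : ∀ k, 0 ≤ a k := fun k => ENNReal.toReal_nonneg
  have hsummable_a : Summable a := summable_of_ne_finset_zero ha0
  have htsum_a : ∑' k, a k = 1 := by rw [tsum_eq_sum ha0]; exact hsum_a
  -- the test function f
  set f : ℕ → ℝ := fun k => if pois l k ≤ a k then 1 else 0 with hfdef
  have hf0 : ∀ k, 0 ≤ f k := by
    intro k
    rw [hfdef]
    dsimp only
    split <;> norm_num
  have hf1 : ∀ k, f k ≤ 1 := by
    intro k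
    rw [hfdef]
    dsimp only
    split <;> norm_num
  have hsummable_b : Summable (pois l) := (hasSum_pois hl).summable
  have htsum_b : ∑' k, pois l k = 1 := (hasSum_pois hl).tsum_eq
  have hsummable_bf : Summable (fun k => pois l k * f k) := summable_pf hl hf0 hf1
  have hsummable_af : Summable (fun k => a k * f k) :=
    summable_of_ne_finset_zero (s := Finset.range (n+1))
      (fun k hk => by rw [ha0 k hk]; ring)
  have hsummable_cf : Summable (fun k => (a k - pois l k) * f k) := by
    have : (fun k => (a k - pois l k) * f k) = fun k => a k * f k - pois l k * f k := by
      funext k; ring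
    rw [this]
    exact hsummable_af.sub hsummable_bf
  have hsummable_c : Summable (fun k => a k - pois l k) := hsummable_a.sub hsummable_b
  have htsum_c : ∑' k, (a k - pois l k) = 0 := by
    rw [Summable.tsum_sub hsummable_a hsummable_b, htsum_a, htsum_b]
    ring
  have habs : ∀ k, |a k - pois l k| = 2*((a k - pois l k) * f k) - (a k - pois l k) := by
    intro k
    rw [hfdef]
    dsimp only
    split
    · next h => rw [abs_of_nonneg (by linarith)]; ring
    · next h =>
        push_neg at h
        rw [abs_of_neg (by linarith)]
        ring
  have key1 : (1/2 : ℝ) * ∑' k, |a k - pois l k|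
      = (∑ k ∈ Finset.range (n+1), a k * f k) - steinMu l f := by
    have e1 : ∑' k, |a k - pois l k|
        = ∑' k, (2*((a k - pois l k) * f k) - (a k - pois l k)) := by
      congr 1
      funext k
      exact habs k
    rw [e1, Summable.tsum_sub (hsummable_cf.mul_left 2) hsummable_c, tsum_mul_left, htsum_c]
    have e2 : ∑' k, (a k - pois l k) * f k
        = ∑' k, a k * f k - ∑' k, pois l k * f k := by
      rw [← Summable.tsum_sub hsummable_af hsummable_bf]
      congr 1
      funext k
      ring
    rw [e2, tsum_eq_sum (s := Finset.range (n+1)) (fun k hk => by rw [ha0 k hk]; ring)]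
    rw [steinMu]
    ring
  -- boundedness of the Stein solution on the relevant range
  set C : ℝ := ∑ i ∈ Finset.range (n+2), |steinG l f i| with hCdef
  have hgC : ∀ m, m ≤ n+1 → |steinG l f m| ≤ C := by
    intro m hm
    rw [hCdef]
    exact Finset.single_le_sum (f := fun i => |steinG l f i|)
      (fun i _ => abs_nonneg _) (Finset.mem_range.mpr (by omega))
  have hC0 : 0 ≤ C := Finset.sum_nonneg (fun i _ => abs_nonneg _)
  have hIntBdd : ∀ (h : Ω → ℝ) (C' : ℝ), Measurable h → (∀ ω, |h ω| ≤ C') →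
      Integrable h P := by
    intro h C' hm hb
    exact (integrable_const C').mono' hm.aestronglyMeasurable
      (Filter.Eventually.of_forall (fun ω => by simpa [Real.norm_eq_abs] using hb ω))
  have hmcast : Measurable (fun m : ℕ => (m : ℝ)) := measurable_from_top
  have hmg : ∀ (ψ : ℕ → ℝ), Measurable ψ := fun _ => measurable_from_top
  -- the leave-one-out sums
  set Kj : ℕ → Ω → ℕ := fun j ω => ∑ i ∈ (Finset.Icc 1 n).erase j, ξ i ω with hKjdef
  have hKjmeas : ∀ j, Measurable (Kj j) := by
    intro j
    apply Finset.measurable_sum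
    intro i _
    exact hmeas i
  have hKjle : ∀ j ω, Kj j ω ≤ n := by
    intro j ω
    calc Kj j ω ≤ K ω := Finset.sum_le_sum_of_subset (Finset.erase_subset _ _)
    _ ≤ n := hKle ω
  have hKsplit : ∀ j ∈ Finset.Icc 1 n, ∀ ω, K ω = ξ j ω + Kj j ω := by
    intro j hj ω
    rw [hKdef, hKjdef]
    exact (Finset.add_sum_erase _ _ hj).symm
  -- integrability facts
  have hIg1 : Integrable (fun ω => steinG l f (K ω + 1)) P := by
    refine hIntBdd _ C ((hmg (fun m => steinG l f (m+1))).comp hKmeas) (fun ω => hgC _ (by have := hKle ω; omega))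
  have hIgj : ∀ j, Integrable (fun ω => steinG l f (Kj j ω + 1)) P := by
    intro j
    refine hIntBdd _ C ((hmg (fun m => steinG l f (m+1))).comp (hKjmeas j)) (fun ω => hgC _ (by have := hKjle j ω; omega))
  have hIxig : ∀ j, Integrable (fun ω => (ξ j ω : ℝ) * steinG l f (K ω)) P := by
    intro j
    refine hIntBdd _ C ((hmcast.comp (hmeas j)).mul ((hmg (fun m => steinG l f m)).comp hKmeas)) ?_
    intro ω
    rw [abs_mul]
    have h1 : |(ξ j ω : ℝ)| ≤ 1 := by
      rw [abs_of_nonneg (by positivity)]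
      exact_mod_cast hval j ω
    have h2 : |steinG l f (K ω)| ≤ C := hgC _ (by have := hKle ω; omega)
    nlinarith [abs_nonneg (steinG l f (K ω))]
  have hIxi : ∀ j, Integrable (fun ω => (ξ j ω : ℝ)) P := by
    intro j
    refine hIntBdd _ 1 (hmcast.comp (hmeas j)) ?_
    intro ω
    rw [abs_of_nonneg (by positivity)]
    exact_mod_cast hval j ω
  have hIK : Integrable (fun ω => (K ω : ℝ) * steinG l f (K ω)) P := by
    refine hIntBdd _ ((n:ℝ) * C) ((hmcast.comp hKmeas).mul ((hmg (fun m => steinG l f m)).comp hKmeas)) ?_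
    intro ω
    rw [abs_mul]
    have h1 : |(K ω : ℝ)| ≤ (n:ℝ) := by
      rw [abs_of_nonneg (by positivity)]
      exact_mod_cast hKle ω
    have h2 : |steinG l f (K ω)| ≤ C := hgC _ (by have := hKle ω; omega)
    have h3 : (0:ℝ) ≤ |(K ω : ℝ)| := abs_nonneg _
    nlinarith [abs_nonneg (steinG l f (K ω))]
  have hIfK : Integrable (fun ω => f (K ω)) P := by
    refine hIntBdd _ 1 ((hmg f).comp hKmeas) ?_
    intro ω
    rw [abs_of_nonneg (hf0 _)]
    exact hf1 _
  -- the expectation of ξ j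
  have hxi_int : ∀ j ∈ Finset.Icc 1 n, ∫ ω, (ξ j ω : ℝ) ∂P = p j := by
    intro j hj
    have hset : MeasurableSet {ω | ξ j ω = 1} := (hmeas j) (measurableSet_singleton 1)
    have hind : ∀ ω, (ξ j ω : ℝ) = Set.indicator {ω' | ξ j ω' = 1} (fun _ => (1:ℝ)) ω := by
      intro ω
      rcases Nat.le_one_iff_eq_zero_or_eq_one.mp (hval j ω) with h | h <;>
        simp [Set.indicator, Set.mem_setOf_eq, h]
    calc ∫ ω, (ξ j ω : ℝ) ∂P
        = ∫ ω, Set.indicator {ω' | ξ j ω' = 1} (fun _ => (1:ℝ)) ω ∂P := by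
          congr 1
          funext ω
          exact hind ω
      _ = (P {ω | ξ j ω = 1}).toReal • (1:ℝ) := integral_indicator_const (1:ℝ) hset
      _ = p j := by rw [smul_eq_mul, mul_one]; exact hp j hj
  -- Stein identity
  have hstein_pt : ∀ ω, f (K ω) - steinMu l f
      = l * steinG l f (K ω + 1) - (K ω : ℝ) * steinG l f (K ω) := by
    intro ω
    have := stein_eq (f := f) hl (K ω)
    linarith
  have hEf : ∫ ω, f (K ω) ∂P = ∑ k ∈ Finset.range (n+1), a k * f k := hInt f
  have step1 : ∫ ω, (f (K ω) - steinMu l f) ∂P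
      = (∑ k ∈ Finset.range (n+1), a k * f k) - steinMu l f := by
    rw [integral_sub hIfK (integrable_const _), hEf, integral_const]
    simp
  have step2 : ∫ ω, (f (K ω) - steinMu l f) ∂P
      = l * ∫ ω, steinG l f (K ω + 1) ∂P - ∫ ω, (K ω : ℝ) * steinG l f (K ω) ∂P := by
    have e : (fun ω => f (K ω) - steinMu l f)
        = fun ω => l * steinG l f (K ω + 1) - (K ω : ℝ) * steinG l f (K ω) := by
      funext ω
      exact hstein_pt ω
    rw [e, integral_sub (hIg1.const_mul l) hIK, integral_const_mul l _]
  -- ∫ K g(K) = ∑_j p j ∫ g(Kj + 1)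
  have hsplit_pt : ∀ j ∈ Finset.Icc 1 n, ∀ ω,
      (ξ j ω : ℝ) * steinG l f (K ω) = (ξ j ω : ℝ) * steinG l f (Kj j ω + 1) := by
    intro j hj ω
    rcases Nat.le_one_iff_eq_zero_or_eq_one.mp (hval j ω) with h | h
    · rw [h]; simp
    · have hK : K ω = Kj j ω + 1 := by rw [hKsplit j hj ω, h]; ring
      rw [hK]
  have hindepj : ∀ j ∈ Finset.Icc 1 n,
      IndepFun (fun ω => (ξ j ω : ℝ)) (fun ω => steinG l f (Kj j ω + 1)) P := by
    intro j hj
    have base : IndepFun (∑ i ∈ (Finset.Icc 1 n).erase j, ξ i) (ξ j) P :=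
      iIndepFun.indepFun_finset_sum_of_notMem hindep hmeas (Finset.notMem_erase j _)
    have hKj_eq : (∑ i ∈ (Finset.Icc 1 n).erase j, ξ i) = Kj j := by
      funext ω
      rw [hKjdef]
      simp [Finset.sum_apply]
    rw [hKj_eq] at base
    exact IndepFun.comp base.symm (hmcast) (hmg (fun m => steinG l f (m+1)))
  have step3 : ∫ ω, (K ω : ℝ) * steinG l f (K ω) ∂P
      = ∑ j ∈ Finset.Icc 1 n, p j * ∫ ω, steinG l f (Kj j ω + 1) ∂P := by
    have e1 : ∀ ω, (K ω : ℝ) * steinG l f (K ω)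
        = ∑ j ∈ Finset.Icc 1 n, (ξ j ω : ℝ) * steinG l f (K ω) := by
      intro ω
      rw [← Finset.sum_mul]
      congr 1
      rw [hKdef]
      push_cast
      rfl
    calc ∫ ω, (K ω : ℝ) * steinG l f (K ω) ∂P
        = ∫ ω, ∑ j ∈ Finset.Icc 1 n, (ξ j ω : ℝ) * steinG l f (K ω) ∂P := by
          congr 1
          funext ω
          exact e1 ω
      _ = ∑ j ∈ Finset.Icc 1 n, ∫ ω, (ξ j ω : ℝ) * steinG l f (K ω) ∂P :=
          integral_finset_sum _ (fun j _ => hIxig j)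
      _ = ∑ j ∈ Finset.Icc 1 n, p j * ∫ ω, steinG l f (Kj j ω + 1) ∂P := by
          apply Finset.sum_congr rfl
          intro j hj
          have e2 : ∫ ω, (ξ j ω : ℝ) * steinG l f (K ω) ∂P
              = ∫ ω, (ξ j ω : ℝ) * steinG l f (Kj j ω + 1) ∂P := by
            congr 1
            funext ω
            exact hsplit_pt j hj ω
          rw [e2]
          have e3 := IndepFun.integral_mul_eq_mul_integral (hindepj j hj) (hIxi j).aestronglyMeasurable (hIgj j).aestronglyMeasurable
          have e4 : (fun ω => (ξ j ω : ℝ)) * (fun ω => steinG l f (Kj j ω + 1))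
              = fun ω => (ξ j ω : ℝ) * steinG l f (Kj j ω + 1) := rfl
          rw [e4] at e3
          rw [e3, hxi_int j hj]
  -- combine
  have hlp : l = ∑ j ∈ Finset.Icc 1 n, p j := rfl
  have hdiff : (∑ k ∈ Finset.range (n+1), a k * f k) - steinMu l f
      = ∑ j ∈ Finset.Icc 1 n, p j * (∫ ω, steinG l f (K ω + 1) ∂P
          - ∫ ω, steinG l f (Kj j ω + 1) ∂P) := by
    rw [← step1, step2, step3]
    rw [hlp, Finset.sum_mul, ← Finset.sum_sub_distrib]
    apply Finset.sum_congr rfl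
    intro j _
    ring
  have hperj : ∀ j ∈ Finset.Icc 1 n,
      |∫ ω, steinG l f (K ω + 1) ∂P - ∫ ω, steinG l f (Kj j ω + 1) ∂P| ≤ p j * (1/l) := by
    intro j hj
    rw [← integral_sub hIg1 (hIgj j)]
    have h1 : |∫ ω, (steinG l f (K ω + 1) - steinG l f (Kj j ω + 1)) ∂P|
        ≤ ∫ ω, |steinG l f (K ω + 1) - steinG l f (Kj j ω + 1)| ∂P := by
      simpa [Real.norm_eq_abs] using
        norm_integral_le_integral_norm (μ := P)
          (f := fun ω => steinG l f (K ω + 1) - steinG l f (Kj j ω + 1))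
    refine h1.trans ?_
    have hpw : ∀ ω, |steinG l f (K ω + 1) - steinG l f (Kj j ω + 1)|
        ≤ (ξ j ω : ℝ) * (1/l) := by
      intro ω
      rcases Nat.le_one_iff_eq_zero_or_eq_one.mp (hval j ω) with h | h
      · have hK : K ω = Kj j ω := by rw [hKsplit j hj ω, h]; ring
        rw [hK, h]
        simp
      · have hK : K ω + 1 = Kj j ω + 2 := by rw [hKsplit j hj ω, h]; ring
        rw [hK, h]
        simpa using stein_increment hl hf0 hf1 (Kj j ω)
    have h2 : ∫ ω, |steinG l f (K ω + 1) - steinG l f (Kj j ω + 1)| ∂P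
        ≤ ∫ ω, (ξ j ω : ℝ) * (1/l) ∂P := by
      apply integral_mono ((hIg1.sub (hIgj j)).abs) ((hIxi j).mul_const (1/l)) hpw
    refine h2.trans ?_
    rw [integral_mul_const, hxi_int j hj]
  have hbound : (∑ k ∈ Finset.range (n+1), a k * f k) - steinMu l f
      ≤ (∑ j ∈ Finset.Icc 1 n, p j ^ 2) * (1/l) := by
    rw [hdiff]
    calc ∑ j ∈ Finset.Icc 1 n, p j * (∫ ω, steinG l f (K ω + 1) ∂P
          - ∫ ω, steinG l f (Kj j ω + 1) ∂P)
        ≤ ∑ j ∈ Finset.Icc 1 n, p j * (p j * (1/l)) := by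
          apply Finset.sum_le_sum
          intro j hj
          have h := hperj j hj
          have hpj := (hppos j hj).le
          have h2 := (abs_le.mp h).2
          have h3 : ∫ ω, steinG l f (K ω + 1) ∂P - ∫ ω, steinG l f (Kj j ω + 1) ∂P
              ≤ p j * (1/l) := le_trans (le_abs_self _) h
          exact mul_le_mul_of_nonneg_left h3 hpj
      _ = (∑ j ∈ Finset.Icc 1 n, p j ^ 2) * (1/l) := by
          rw [Finset.sum_mul]
          apply Finset.sum_congr rfl
          intro j _
          ring
  -- arithmetic
  have hn' : (1:ℝ) ≤ (n:ℝ) := by exact_mod_cast hn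
  have hnθ : (0:ℝ) < (n:ℝ) + θ := by linarith
  have hL : 0 < Real.log (1 + n/θ) := by
    apply Real.log_pos
    have : 0 < (n:ℝ)/θ := by positivity
    linarith
  have hd : 0 < θ * Real.log (1 + n/θ) + n/(2*((n:ℝ)+θ)) := by positivity
  have hS := partC_S n hn hθ
  have hlam := partC_lam n hn hθ
  have hNum : (0:ℝ) ≤ (n:ℝ)*θ + n + θ := by positivity
  have hfinal : (∑ j ∈ Finset.Icc 1 n, p j ^ 2) * (1/l)
      ≤ ((n : ℝ) * θ + n + θ) / (θ * (n + θ) * Real.log (1 + n / θ) + n / 2) := by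
    have h1 : (∑ j ∈ Finset.Icc 1 n, p j ^ 2) * (1/l)
        = (∑ j ∈ Finset.Icc 1 n, p j ^ 2) / l := by ring
    rw [h1]
    have h2 : (∑ j ∈ Finset.Icc 1 n, p j ^ 2) / l
        ≤ (((n:ℝ)*θ + n + θ)/((n:ℝ)+θ)) / (θ * Real.log (1 + n/θ) + n/(2*((n:ℝ)+θ))) := by
      apply div_le_div₀ (by positivity) hS hd
      exact hlam
    refine h2.trans ?_
    rw [div_div]
    apply le_of_eq
    congr 1
    field_simp
  have main : (1/2 : ℝ) * ∑' k, |a k - pois l k|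
      ≤ ((n : ℝ) * θ + n + θ) / (θ * (n + θ) * Real.log (1 + n / θ) + n / 2) := by
    rw [key1]
    exact hbound.trans hfinal
  exact main
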